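/- Let (r_k)_{k=1}^∞ be a sequence of real numbers with the following property: for every ε > 0 there exists K = K(ε) ∈ ℕ such that for every k ∈ ℕ, if k_1, …, k_n are natural numbers with k_1, …, k_n ≥ K and k = k_1 + ⋯ + k_n, then r_k ≤ r_{k_1} + ⋯ + r_{k_n} + kε. Then lim_{k→∞} r_k / k exists (as a real number or −∞). -/

import Mathlib

open Filter Topology

/-- Key estimate: for any `ε > 0` with constant `K`, and any `m ≥ max K 1`,
eventually `r k / k ≤ r m / m + 2ε`. -/
lemma stmt11_key (r : ℕ → ℝ) (ε : ℝ) (hε : 0 < ε) (K : ℕ)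
    (hK : ∀ (k : ℕ) (n : ℕ) (ks : Fin (n + 1) → ℕ),
      (∀ i, K ≤ ks i) → k = ∑ i, ks i →
      r k ≤ (∑ i, r (ks i)) + (k : ℝ) * ε)
    (m : ℕ) (hm1 : 1 ≤ m) (hmK : K ≤ m) :
    ∀ᶠ k in atTop, r k / k ≤ r m / m + 2 * ε := by
  have hne : (Finset.Ico m (2*m)).Nonempty := ⟨m, by simp [Finset.mem_Ico]; omega⟩
  set C : ℝ := (Finset.Ico m (2*m)).sup' hne (fun j => |r j|) with hC
  set D : ℝ := 2*m*|r m / m| + C with hDdef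
  have hD : Tendsto (fun k : ℕ => D / k) atTop (𝓝 0) := tendsto_const_div_atTop_nhds_zero_nat D
  filter_upwards [eventually_ge_atTop (2*m), hD.eventually (eventually_le_nhds hε)]
    with k hk2m hDk
  have hk0 : 0 < k := by omega
  have hk0R : (0:ℝ) < k := by exact_mod_cast hk0
  have hm0R : (0:ℝ) < m := by exact_mod_cast hm1
  -- decompose k = q * m + ρ with m ≤ ρ < 2m
  have hd2 : 2 ≤ k / m := (Nat.le_div_iff_mul_le (by omega)).mpr (by omega)
  obtain ⟨q, hq⟩ : ∃ q, k / m = q + 1 := ⟨k/m - 1, by omega⟩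
  set ρ : ℕ := k % m + m with hρdef
  have hρ1 : m ≤ ρ := by omega
  have hρ2 : ρ < 2*m := by
    have := Nat.mod_lt k (show 0 < m by omega)
    omega
  have hkeq : k = q * m + ρ := by
    have h1 : m * (q + 1) + k % m = k := by rw [← hq]; exact Nat.div_add_mod k m
    calc k = m * (q + 1) + k % m := h1.symm
      _ = q * m + (k % m + m) := by ring
  set ks : Fin (q + 1) → ℕ := Fin.snoc (fun _ => m) ρ with hks
  have hks_le : ∀ i, K ≤ ks i := by
    intro i
    induction i using Fin.lastCases with
    | last => simp [hks]; omega
    | cast i => simp [hks]; exact hmK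
  have hsum : k = ∑ i, ks i := by
    rw [Fin.sum_univ_castSucc]
    simp [hks, Finset.sum_const, Finset.card_univ, hkeq]
  have hmain := hK k q ks hks_le hsum
  have hsum_r : (∑ i, r (ks i)) = q * r m + r ρ := by
    rw [Fin.sum_univ_castSucc]
    simp [hks, Finset.sum_const, Finset.card_univ, nsmul_eq_mul]
  rw [hsum_r] at hmain
  -- bound r ρ
  have hrρ : r ρ ≤ C := by
    refine le_trans (le_abs_self _) ?_
    exact Finset.le_sup' (fun j => |r j|) (by simp [Finset.mem_Ico]; omega)
  -- bound q * r m
  set x : ℝ := r m / m with hx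
  have hrm : r m = m * x := by
    rw [hx]; field_simp [hm0R.ne']
  have hqm : (q:ℝ) * m = (k:ℝ) - ρ := by
    have : ((q * m + ρ : ℕ) : ℝ) = (k:ℝ) := congrArg (fun n : ℕ => (n:ℝ)) hkeq.symm
    push_cast at this
    linarith
  have hρR : (m:ℝ) ≤ ρ ∧ (ρ:ℝ) ≤ 2*m :=
    ⟨by exact_mod_cast hρ1, by exact_mod_cast hρ2.le⟩
  have hqrm : (q:ℝ) * r m ≤ (k:ℝ) * x + 2*m*|x| := by
    have h1 : (q:ℝ) * r m = ((k:ℝ) - ρ) * x := by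
      rw [hrm, ← hqm]; ring
    have h2 : -((ρ:ℝ) * x) ≤ (ρ:ℝ) * |x| := by
      have := neg_abs_le x
      nlinarith [hρR.1, hm0R]
    have h3 : (ρ:ℝ) * |x| ≤ 2*m*|x| := by
      have := abs_nonneg x
      nlinarith [hρR.2]
    nlinarith [h1]
  have hDk' : D ≤ (k:ℝ) * ε := by
    rw [div_le_iff₀ hk0R] at hDk
    linarith
  rw [div_le_iff₀ hk0R]
  have : r k ≤ (k:ℝ) * x + D + (k:ℝ) * ε := by
    rw [hDdef]; linarith
  calc r k ≤ (k:ℝ) * x + D + (k:ℝ) * ε := this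
    _ ≤ (k:ℝ) * x + (k:ℝ) * ε + (k:ℝ) * ε := by linarith
    _ = (x + 2*ε) * k := by ring
    _ = (r m / m + 2*ε) * k := by rw [hx]

/-- a generalization of Fekete's subadditivity lemma: if for every
`ε > 0` there is `K = K(ε) ∈ ℕ` such that whenever `k = k₁ + ⋯ + kₙ` with all
`kᵢ ≥ K`, one has `r_k ≤ r_{k₁} + ⋯ + r_{kₙ} + kε`, then `lim_{k→∞} r_k / k`
exists (as a real number, or is `−∞`). -/
theorem stmt11 (r : ℕ → ℝ)
    (h : ∀ ε : ℝ, 0 < ε → ∃ K : ℕ, ∀ (k : ℕ) (n : ℕ) (ks : Fin (n + 1) → ℕ),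
      (∀ i, K ≤ ks i) → k = ∑ i, ks i →
      r k ≤ (∑ i, r (ks i)) + (k : ℝ) * ε) :
    (∃ L : ℝ, Tendsto (fun k : ℕ => r k / (k : ℝ)) atTop (𝓝 L)) ∨
      Tendsto (fun k : ℕ => r k / (k : ℝ)) atTop atBot := by
  set a : ℕ → ℝ := fun k => r k / (k : ℝ) with ha
  by_cases hbdd : BddBelow (Set.range a)
  · left
    obtain ⟨b, hb⟩ := hbdd
    have hblo : IsBoundedUnder (· ≥ ·) atTop a :=
      isBoundedUnder_of ⟨b, fun k => hb ⟨k, rfl⟩⟩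
    obtain ⟨K1, hK1⟩ := h 1 one_pos
    have hup : IsBoundedUnder (· ≤ ·) atTop a := by
      have := stmt11_key r 1 one_pos K1 hK1 (max K1 1) (le_max_right _ _) (le_max_left _ _)
      exact ⟨r (max K1 1) / (max K1 1) + 2 * 1, eventually_map.mpr this⟩
    have hcob_ge : IsCoboundedUnder (· ≥ ·) atTop a := hup.isCoboundedUnder_ge
    have hcob_le : IsCoboundedUnder (· ≤ ·) atTop a := hblo.isCoboundedUnder_le
    have hkey : limsup a atTop ≤ liminf a atTop := by
      refine le_of_forall_pos_le_add fun δ hδ => ?_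
      obtain ⟨K, hK⟩ := h (δ/3) (by linarith)
      have hfreq : ∃ᶠ m in atTop, a m < liminf a atTop + δ/3 :=
        frequently_lt_of_liminf_lt hcob_ge (by linarith)
      obtain ⟨m, hm, hmge⟩ := (hfreq.and_eventually (eventually_ge_atTop (max K 1))).exists
      have hkm := stmt11_key r (δ/3) (by linarith) K hK m
        (le_trans (le_max_right _ _) hmge) (le_trans (le_max_left _ _) hmge)
      refine limsup_le_of_le hcob_le ?_
      filter_upwards [hkm] with k hk
      calc a k ≤ a m + 2 * (δ/3) := hk
        _ ≤ liminf a atTop + δ := by linarith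
    have heq : liminf a atTop = limsup a atTop :=
      le_antisymm (liminf_le_limsup hup hblo) hkey
    exact ⟨limsup a atTop, tendsto_of_liminf_eq_limsup heq rfl hup hblo⟩
  · right
    rw [tendsto_atBot]
    intro c
    obtain ⟨K1, hK1⟩ := h 1 one_pos
    set M : ℕ := max K1 1 with hM
    have hMne : (Finset.range M).Nonempty := Finset.nonempty_range_iff.mpr (by omega)
    set b : ℝ := min (c - 2) ((Finset.range M).inf' hMne a) with hbdef
    obtain ⟨y, hy, hm⟩ := not_bddBelow_iff.mp hbdd b
    obtain ⟨m, rfl⟩ := hy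
    have hmM : M ≤ m := by
      by_contra hc
      push_neg at hc
      have : (Finset.range M).inf' hMne a ≤ a m :=
        Finset.inf'_le a (by simp [Finset.mem_range]; omega)
      have : b ≤ a m := le_trans (min_le_right _ _) this
      linarith
    have hkm := stmt11_key r 1 one_pos K1 hK1 m
      (le_trans (le_max_right _ _) hmM) (le_trans (le_max_left _ _) hmM)
    filter_upwards [hkm] with k hk
    have hb2 : b ≤ c - 2 := min_le_left _ _
    calc a k ≤ a m + 2 * 1 := hk
      _ ≤ b + 2 := by linarith
      _ ≤ c := by linarith
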